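/- If A_1, …, A_n are primitive and pairwise distinct nonempty words, then the lexicographically smallest concatenation over all permutations is achieved by a unique permutation. -/

import Mathlib

/-- `wpow A n` is the `n`-fold concatenation `A^n` of the word `A`. -/
def wpow {α : Type*} (A : List α) : ℕ → List α
  | 0 => []
  | n + 1 => A ++ wpow A n


/-- A word is primitive if it is nonempty and is not a proper power `B^k`, `k ≥ 2`. -/
def Primitive {α : Type*} (A : List α) : Prop :=
  A ≠ [] ∧ ∀ (B : List α) (k : ℕ), 2 ≤ k → A ≠ wpow B k


namespace Stmt12

variable {α : Type*}

/-- the infinite periodic sequence of a nonempty word -/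
def seq (u : List α) (h : 0 < u.length) (i : ℕ) : α := u[i % u.length]'(Nat.mod_lt _ h)

lemma seq_lt (u : List α) (h : 0 < u.length) (i : ℕ) (hi : i < u.length) :
    seq u h i = u[i] := by
  simp [seq, Nat.mod_eq_of_lt hi]

lemma seq_sub (u : List α) (h : 0 < u.length) (i : ℕ) (hi : u.length ≤ i) :
    seq u h i = seq u h (i - u.length) := by
  simp only [seq]
  congr 1
  exact Nat.mod_eq_sub_mod hi

lemma length_wpow (C : List α) (m : ℕ) : (wpow C m).length = m * C.length := by
  induction m with
  | zero => simp [wpow]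
  | succ k ih => simp [wpow, ih]; ring

lemma getElem_wpow (C : List α) (m j : ℕ) (hj : j < (wpow C m).length) (hC : 0 < C.length) :
    (wpow C m)[j] = C[j % C.length]'(Nat.mod_lt _ hC) := by
  induction m generalizing j with
  | zero => simp [wpow] at hj
  | succ k ih =>
    have hj' : j < C.length + (wpow C k).length := by
      simpa [wpow] using hj
    by_cases hjc : j < C.length
    · simp [wpow, List.getElem_append_left hjc, Nat.mod_eq_of_lt hjc]
    · push_neg at hjc
      have : (wpow C (k+1))[j] = (wpow C k)[j - C.length]'(by omega) := by
        simp only [wpow]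
        exact List.getElem_append_right hjc
      rw [this, ih _ (by omega)]
      congr 1
      exact (Nat.mod_eq_sub_mod hjc).symm

lemma seq_wpow (C : List α) (hC : 0 < C.length) (m : ℕ) (h : 0 < (wpow C m).length) :
    seq (wpow C m) h = seq C hC := by
  funext i
  have hm : 0 < m := by
    rcases m with _ | k
    · simp [wpow] at h
    · omega
  simp only [seq]
  rw [getElem_wpow C m _ _ hC]
  congr 1
  rw [length_wpow]
  exact Nat.mod_mod_of_dvd i ⟨m, by ring⟩

/-- commuting words are powers of a common word -/
lemma comm_pow : ∀ (N : ℕ) (u v : List α), u.length + v.length ≤ N → u ++ v = v ++ u →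
    ∃ (C : List α) (a b : ℕ), u = wpow C a ∧ v = wpow C b := by
  intro N
  induction N with
  | zero =>
    intro u v hN _
    have hu : u = [] := by
      cases u with
      | nil => rfl
      | cons a l => simp at hN
    have hv : v = [] := by
      cases v with
      | nil => rfl
      | cons a l => simp at hN
    exact ⟨[], 0, 0, by simp [hu, wpow], by simp [hv, wpow]⟩
  | succ n ih =>
    intro u v hN hc
    rcases eq_or_ne u [] with rfl | hu
    · exact ⟨v, 0, 1, by simp [wpow], by simp [wpow]⟩
    rcases eq_or_ne v [] with rfl | hv
    · exact ⟨u, 1, 0, by simp [wpow], by simp [wpow]⟩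
    by_cases hlen : u.length ≤ v.length
    · -- u is a prefix of v
      have hpre : u <+: v := by
        have : u <+: u ++ v := List.prefix_append u v
        rw [hc] at this
        exact List.prefix_of_prefix_length_le this (List.prefix_append v u) hlen
      obtain ⟨w, rfl⟩ := hpre
      have hcomm : u ++ w = w ++ u := by
        have h2 : u ++ (u ++ w) = u ++ (w ++ u) := by
          rw [hc]; simp [List.append_assoc]
        exact List.append_cancel_left h2
      have hwlen : u.length + w.length ≤ n := by
        have h1 : 0 < u.length := List.length_pos_iff.2 hu
        have := hN
        simp only [List.length_append] at this ⊢
        omega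
      obtain ⟨C, a, b, hua, hwb⟩ := ih u w hwlen hcomm
      refine ⟨C, a, a + b, hua, ?_⟩
      have : wpow C (a + b) = wpow C a ++ wpow C b := by
        clear * -
        induction a with
        | zero => simp [wpow]
        | succ k ihh => simp [wpow, Nat.succ_add, ihh]
      rw [this, ← hua, ← hwb]
    · -- symmetric: v prefix of u
      push_neg at hlen
      have hpre : v <+: u := by
        have : v <+: v ++ u := List.prefix_append v u
        rw [← hc] at this
        exact List.prefix_of_prefix_length_le this (List.prefix_append u v) (le_of_lt hlen)
      obtain ⟨w, rfl⟩ := hpre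
      have hcomm : v ++ w = w ++ v := by
        have h2 : v ++ (v ++ w) = v ++ (w ++ v) := by
          rw [← hc]; simp [List.append_assoc]
        exact List.append_cancel_left h2
      have hwlen : v.length + w.length ≤ n := by
        have h1 : 0 < v.length := List.length_pos_iff.2 hv
        have := hN
        simp only [List.length_append] at this ⊢
        omega
      obtain ⟨C, a, b, hva, hwb⟩ := ih v w hwlen hcomm
      refine ⟨C, a + b, a, ?_, hva⟩
      have : wpow C (a + b) = wpow C a ++ wpow C b := by
        clear * -
        induction a with
        | zero => simp [wpow]
        | succ k ihh => simp [wpow, Nat.succ_add, ihh]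
      rw [this, ← hva, ← hwb]

lemma wpow_one (C : List α) : wpow C 1 = C := by simp [wpow]

lemma wpow_ne_nil {C : List α} {a : ℕ} (h : wpow C a ≠ []) : C ≠ [] := by
  intro hC
  apply h
  subst hC
  induction a with
  | zero => simp [wpow]
  | succ k ihh => simpa [wpow] using ihh

/-- commuting nonempty words have the same periodic sequence -/
lemma seq_eq_of_comm {u v : List α} (hu : 0 < u.length) (hv : 0 < v.length)
    (hc : u ++ v = v ++ u) : seq u hu = seq v hv := by
  obtain ⟨C, a, b, hua, hvb⟩ := comm_pow (u.length + v.length) u v le_rfl hc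
  have hC : 0 < C.length := by
    have : C ≠ [] := wpow_ne_nil (by rw [← hua]; exact List.length_pos_iff.1 hu)
    exact List.length_pos_iff.2 this
  subst hua hvb
  rw [seq_wpow C hC a hu, seq_wpow C hC b hv]

/-- Key lemma: if `seq u` and `seq v` agree below `j` then `(u++v)[j] = seq u j`. -/
lemma keyA {u v : List α} (hu : 0 < u.length) (hv : 0 < v.length) :
    ∀ (j : ℕ) (hj : j < u.length + v.length),
      (∀ i, i < j → seq u hu i = seq v hv i) →
      (u ++ v)[j]'(by simpa using hj) = seq u hu j := by
  intro j hj hagree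
  by_cases hju : j < u.length
  · rw [List.getElem_append_left hju, seq_lt u hu j hju]
  · push_neg at hju
    rw [List.getElem_append_right hju]
    have h1 : j - u.length < v.length := by omega
    rw [← seq_lt v hv _ h1, ← hagree _ (by omega), seq_sub u hu j hju]

/-- equal periodic sequences give commuting words -/
lemma comm_of_seq_eq {u v : List α} (hu : 0 < u.length) (hv : 0 < v.length)
    (h : seq u hu = seq v hv) : u ++ v = v ++ u := by
  apply List.ext_getElem (by simp [Nat.add_comm])
  intro j h1 h2
  have hj : j < u.length + v.length := by simpa using h1
  have e1 := keyA hu hv j hj (fun i _ => congrFun h i)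
  have e2 := keyA hv hu j (by omega) (fun i _ => (congrFun h i).symm)
  rw [e1, e2, h]



section Ord
set_option linter.unusedSectionVars false
variable [LinearOrder α]

/-- lexicographic order on sequences -/
def sle (x y : ℕ → α) : Prop := ∀ k, (∀ i, i < k → x i = y i) → x k ≤ y k

lemma sle_refl (x : ℕ → α) : sle x x := fun _ _ => le_rfl

lemma sle_antisymm {x y : ℕ → α} (h1 : sle x y) (h2 : sle y x) : x = y := by
  funext k
  induction k using Nat.strong_induction_on with
  | _ k ih =>
    exact le_antisymm (h1 k fun i hi => ih i hi) (h2 k fun i hi => (ih i hi).symm)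

lemma sle_trans {x y z : ℕ → α} (h1 : sle x y) (h2 : sle y z) : sle x z := by
  intro k hk
  have key : ∀ i, i < k → x i = y i ∧ y i = z i := by
    intro i hi
    induction i using Nat.strong_induction_on with
    | _ i ih =>
      have hxy : x i ≤ y i := h1 i fun j hj => (ih j hj (lt_trans hj hi)).1
      have hyz : y i ≤ z i := h2 i fun j hj => (ih j hj (lt_trans hj hi)).2
      have hxz : x i = z i := hk i hi
      constructor <;> [exact le_antisymm hxy (hxz ▸ hyz); exact le_antisymm hyz (hxz ▸ hxy)]
  exact le_trans (h1 k fun i hi => (key i hi).1) (h2 k fun i hi => (key i hi).2)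

/-- build a `Lex` proof from a first-difference index -/
lemma lex_of_index : ∀ (k : ℕ) (s t : List α) (hks : k < s.length) (hkt : k < t.length),
    (∀ i (h1 : i < s.length) (h2 : i < t.length), i < k → s[i] = t[i]) →
    s[k] < t[k] → List.Lex (· < ·) s t := by
  intro k
  induction k with
  | zero =>
    intro s t hks hkt _ hlt
    match s, t with
    | a :: s', b :: t' => exact List.Lex.rel (by simpa using hlt)
  | succ m ih =>
    intro s t hks hkt hagree hlt
    match s, t, hks, hkt with
    | a :: s', b :: t', hks, hkt =>
      have hab : a = b := hagree 0 (by simp) (by simp) (by omega)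
      subst hab
      apply List.Lex.cons
      apply ih s' t' (by simpa using hks) (by simpa using hkt)
      · intro i hi1 hi2 him
        have := hagree (i+1) (by simpa using hi1) (by simpa using hi2) (by omega)
        simpa using this
      · simpa using hlt

/-- extract a first-difference index from a `Lex` proof (equal lengths) -/
lemma index_of_lex : ∀ {s t : List α}, List.Lex (· < ·) s t → s.length = t.length →
    ∃ k, ∃ (hks : k < s.length) (hkt : k < t.length),
      (∀ i (h1 : i < s.length) (h2 : i < t.length), i < k → s[i] = t[i]) ∧ s[k] < t[k] := by
  intro s t h hlen
  induction h with
  | nil => simp at hlen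
  | @rel a l b l' hab => exact ⟨0, by simp, by simp, by omega, by simpa using hab⟩
  | @cons a l l' h ih =>
    obtain ⟨k, h1, h2, hagree, hlt⟩ := ih (by simpa using hlen)
    refine ⟨k + 1, by simpa using h1, by simpa using h2, ?_, by simpa using hlt⟩
    intro i hi1 hi2 him
    cases i with
    | zero => simp
    | succ j =>
      have := hagree j (by simpa using hi1) (by simpa using hi2) (by omega)
      simpa using this


lemma lt_iff_lex {s t : List α} : s < t ↔ List.Lex (· < ·) s t := Iff.rfl

lemma le_iff_not_lex {s t : List α} : s ≤ t ↔ ¬ List.Lex (· < ·) t s := by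
  rw [← not_lt]; exact not_congr lt_iff_lex

/-- if the sequences are lex-ordered then `¬ (v++u >lex u++v)` -/
lemma bridge_mpr {u v : List α} (hu : 0 < u.length) (hv : 0 < v.length)
    (h : sle (seq u hu) (seq v hv)) : ¬ List.Lex (· < ·) (v ++ u) (u ++ v) := by
  intro hlex
  obtain ⟨k, hks, hkt, hagree, hlt⟩ := index_of_lex hlex (by simp [Nat.add_comm])
  have hk : k < u.length + v.length := by simpa [Nat.add_comm] using hks
  have hagree_seq : ∀ i, i < k → seq u hu i = seq v hv i := by
    intro i hi
    induction i using Nat.strong_induction_on with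
    | _ i ih =>
      have e1 := keyA hu hv i (by omega) (fun j hj => ih j hj (lt_trans hj hi))
      have e2 := keyA hv hu i (by omega) (fun j hj => (ih j hj (lt_trans hj hi)).symm)
      rw [← e1, ← e2]
      exact (hagree i (by simpa [Nat.add_comm] using (by omega : i < v.length + u.length))
        (by simpa using (by omega : i < u.length + v.length)) hi).symm
  have e1 := keyA hu hv k hk hagree_seq
  have e2 := keyA hv hu k (by omega) (fun j hj => (hagree_seq j hj).symm)
  have : seq v hv k < seq u hu k := by rw [← e1, ← e2]; exact hlt
  exact absurd (h k hagree_seq) (not_le.2 this)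

/-- if the sequences are not lex-ordered then `v++u <lex u++v` -/
lemma bridge_mp {u v : List α} (hu : 0 < u.length) (hv : 0 < v.length)
    (h : ¬ sle (seq u hu) (seq v hv)) : List.Lex (· < ·) (v ++ u) (u ++ v) := by
  simp only [sle, not_forall] at h
  obtain ⟨k, hagree_seq, hlt⟩ := h
  have hlt : seq v hv k < seq u hu k := not_le.1 hlt
  by_cases hk : k < u.length + v.length
  · have e1 := keyA hu hv k hk hagree_seq
    have e2 := keyA hv hu k (by omega) (fun j hj => (hagree_seq j hj).symm)
    apply lex_of_index k (v ++ u) (u ++ v) (by simp; omega) (by simp; omega)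
    · intro i h1 h2 hik
      have f1 := keyA hu hv i (by omega) (fun j hj => hagree_seq j (lt_trans hj hik))
      have f2 := keyA hv hu i (by omega) (fun j hj => (hagree_seq j (lt_trans hj hik)).symm)
      rw [f1, f2, hagree_seq i hik]
    · rw [e1, e2]; exact hlt
  · exfalso
    push_neg at hk
    have hcomm : u ++ v = v ++ u := by
      apply List.ext_getElem (by simp [Nat.add_comm])
      intro j h1 h2
      have hj : j < u.length + v.length := by simpa using h1
      have e1 := keyA hu hv j hj (fun i hi => hagree_seq i (by omega))
      have e2 := keyA hv hu j (by omega) (fun i hi => (hagree_seq i (by omega)).symm)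
      rw [e1, e2, hagree_seq j (by omega)]
    have := seq_eq_of_comm hu hv hcomm
    rw [this] at hlt
    exact lt_irrefl _ hlt

lemma concat_le_iff_sle {u v : List α} (hu : 0 < u.length) (hv : 0 < v.length) :
    u ++ v ≤ v ++ u ↔ sle (seq u hu) (seq v hv) := by
  rw [le_iff_not_lex]
  constructor
  · intro h
    by_contra hs
    exact h (bridge_mp hu hv hs)
  · exact bridge_mpr hu hv

lemma concat_le_trans {u v w : List α} (hu : 0 < u.length) (hv : 0 < v.length)
    (hw : 0 < w.length) (h1 : u ++ v ≤ v ++ u) (h2 : v ++ w ≤ w ++ v) :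
    u ++ w ≤ w ++ u := by
  rw [concat_le_iff_sle hu hv] at h1
  rw [concat_le_iff_sle hv hw] at h2
  rw [concat_le_iff_sle hu hw]
  exact sle_trans h1 h2

lemma prim_eq_of_comm {u v : List α} (hu : Primitive u) (hv : Primitive v)
    (hc : u ++ v = v ++ u) : u = v := by
  obtain ⟨C, a, b, hua, hvb⟩ := comm_pow (u.length + v.length) u v le_rfl hc
  have ha1 : a = 1 := by
    rcases a with _ | _ | m
    · exact absurd hua.symm (by simpa [wpow] using hu.1)
    · rfl
    · exact absurd hua (hu.2 C _ (by omega))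
  have hb1 : b = 1 := by
    rcases b with _ | _ | m
    · exact absurd hvb.symm (by simpa [wpow] using hv.1)
    · rfl
    · exact absurd hvb (hv.2 C _ (by omega))
  rw [hua, hvb, ha1, hb1]

lemma prim_eq_of_le_le {u v : List α} (hu : Primitive u) (hv : Primitive v)
    (h1 : u ++ v ≤ v ++ u) (h2 : v ++ u ≤ u ++ v) : u = v :=
  prim_eq_of_comm hu hv (le_antisymm h1 h2)


/-- local version of Chain' → Pairwise -/
lemma pairwise_of_chain' {β : Type*} {R : β → β → Prop} :
    ∀ (l : List β), (∀ a ∈ l, ∀ b ∈ l, ∀ c ∈ l, R a b → R b c → R a c) →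
    List.Chain' R l → List.Pairwise R l := by
  intro l
  induction l with
  | nil => intro _ _; exact List.Pairwise.nil
  | cons a l ih =>
    intro htrans hchain
    rcases l with _ | ⟨b, l'⟩
    · exact List.pairwise_singleton _ _
    · have hchain' : List.Chain' R (b :: l') := hchain.tail
      have hpw : List.Pairwise R (b :: l') := by
        apply ih _ hchain'
        intro x hx y hy z hz
        exact htrans x (by simp [hx]) y (by simp [hy]) z (by simp [hz])
      have hab : R a b := List.isChain_cons_cons.1 hchain |>.1
      apply List.Pairwise.cons _ hpw
      intro c hc
      rcases List.mem_cons.1 hc with rfl | hc'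
      · exact hab
      · have hbc : R b c := (List.pairwise_cons.1 hpw).1 c hc'
        exact htrans a (by simp) b (by simp) c (by simp [hc']) hab hbc

/-- local version of eq_of_perm_of_sorted -/
lemma eq_of_perm_of_pairwise {β : Type*} {R : β → β → Prop} :
    ∀ (l₁ l₂ : List β), (∀ a ∈ l₁, ∀ b ∈ l₂, R a b → R b a → a = b) →
    l₁.Perm l₂ → List.Pairwise R l₁ → List.Pairwise R l₂ → l₁ = l₂ := by
  intro l₁
  induction l₁ with
  | nil =>
    intro l₂ _ hp _ _
    exact (List.Perm.nil_eq hp).symm ▸ rfl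
  | cons a l ih =>
    intro l₂ hanti hp hs₁ hs₂
    have ha2 : a ∈ l₂ := hp.mem_iff.1 (by simp)
    rcases l₂ with _ | ⟨b, l₂'⟩
    · simp at ha2
    have hab : a = b := by
      rcases List.mem_cons.1 ha2 with h | h
      · exact h
      · -- a ∈ l₂', so R b a from pairwise; and b ∈ a::l (perm), b ≠ a or...
        have hb1 : b ∈ a :: l := hp.symm.mem_iff.1 (by simp)
        rcases List.mem_cons.1 hb1 with h' | h'
        · exact h'.symm
        · -- a ∈ l₂' gives R b a; b ∈ l gives R a b
          have hRba : R b a := (List.pairwise_cons.1 hs₂).1 a h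
          have hRab : R a b := (List.pairwise_cons.1 hs₁).1 b h'
          exact hanti a (by simp) b (by simp) hRab hRba
    subst hab
    have hp' : l.Perm l₂' := by
      exact (List.perm_cons a).1 hp
    have := ih l₂' (fun x hx y hy => hanti x (by simp [hx]) y (by simp [hy]))
      hp' hs₁.tail hs₂.tail
    rw [this]


lemma lex_append : ∀ {s t : List α}, s.length = t.length → List.Lex (· < ·) s t →
    ∀ (y z : List α), List.Lex (· < ·) (s ++ y) (t ++ z) := by
  intro s t hlen h
  induction h with
  | nil => simp at hlen
  | @rel a l b l' hab => intro y z; exact List.Lex.rel hab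
  | @cons a l l' h ih =>
    intro y z
    exact List.Lex.cons (ih (by simpa using hlen) y z)

lemma swap_improve {u v : List α} (h : List.Lex (· < ·) (v ++ u) (u ++ v))
    (x y : List (List α)) :
    (x ++ v :: u :: y).flatten < (x ++ u :: v :: y).flatten := by
  rw [lt_iff_lex]
  have e1 : (x ++ v :: u :: y).flatten = x.flatten ++ ((v ++ u) ++ y.flatten) := by
    simp [List.flatten_append, List.append_assoc]
  have e2 : (x ++ u :: v :: y).flatten = x.flatten ++ ((u ++ v) ++ y.flatten) := by
    simp [List.flatten_append, List.append_assoc]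
  rw [e1, e2]
  apply List.Lex.append_left
  exact lex_append (by simp [Nat.add_comm]) h y.flatten y.flatten

end Ord

lemma ofFn_swap_decomp {β : Type*} {n : ℕ} (g : Fin n → β) (i : ℕ) (hi : i + 1 < n) :
    ∃ x y : List β,
      List.ofFn g = x ++ g ⟨i, by omega⟩ :: g ⟨i+1, hi⟩ :: y ∧
      List.ofFn (fun j => g (Equiv.swap (⟨i, by omega⟩ : Fin n) ⟨i+1, hi⟩ j)) =
        x ++ g ⟨i+1, hi⟩ :: g ⟨i, by omega⟩ :: y := by
  set a : Fin n := ⟨i, by omega⟩ with ha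
  set b : Fin n := ⟨i+1, hi⟩ with hb
  set g' : Fin n → β := fun j => g (Equiv.swap a b j) with hg'
  refine ⟨(List.ofFn g).take i, (List.ofFn g).drop (i+2), ?_, ?_⟩
  · have h1 : List.ofFn g = (List.ofFn g).take i ++ (List.ofFn g).drop i :=
      (List.take_append_drop i _).symm
    rw [List.drop_eq_getElem_cons (by simp; omega), List.drop_eq_getElem_cons (by simp; omega)]
      at h1
    rw [List.getElem_ofFn, List.getElem_ofFn] at h1
    exact h1
  · have h1 : List.ofFn g' = (List.ofFn g').take i ++ (List.ofFn g').drop i :=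
      (List.take_append_drop i _).symm
    rw [List.drop_eq_getElem_cons (by simp; omega), List.drop_eq_getElem_cons (by simp; omega)]
      at h1
    rw [List.getElem_ofFn, List.getElem_ofFn] at h1
    have e1 : g' ⟨i, by omega⟩ = g b := by
      show g (Equiv.swap a b a) = g b
      rw [Equiv.swap_apply_left]
    have e2 : g' ⟨i+1, by omega⟩ = g a := by
      show g (Equiv.swap a b b) = g a
      rw [Equiv.swap_apply_right]
    have e3 : (List.ofFn g').take i = (List.ofFn g).take i := by
      apply List.ext_getElem (by simp)
      intro j hj1 hj2
      have hjn : j < i := by simp at hj1; omega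
      rw [List.getElem_take, List.getElem_take, List.getElem_ofFn, List.getElem_ofFn]
      show g (Equiv.swap a b _) = _
      rw [Equiv.swap_apply_of_ne_of_ne]
      · exact Fin.ne_of_val_ne (by simp [ha]; omega)
      · exact Fin.ne_of_val_ne (by simp [hb]; omega)
    have e4 : (List.ofFn g').drop (i+2) = (List.ofFn g).drop (i+2) := by
      apply List.ext_getElem (by simp)
      intro j hj1 hj2
      rw [List.getElem_drop, List.getElem_drop, List.getElem_ofFn, List.getElem_ofFn]
      show g (Equiv.swap a b _) = _
      rw [Equiv.swap_apply_of_ne_of_ne]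
      · exact Fin.ne_of_val_ne (by simp [ha]; omega)
      · exact Fin.ne_of_val_ne (by simp [hb]; omega)
    rw [h1, e1, e2, e3, e4]

end Stmt12

open Stmt12 in
theorem stmt12 {α : Type*} [LinearOrder α] (n : ℕ) (A : Fin n → List α)
    (hprim : ∀ i, Primitive (A i)) (hinj : Function.Injective A) :
    ∃! π : Equiv.Perm (Fin n),
      ∀ σ : Equiv.Perm (Fin n),
        (List.ofFn fun i => A (π i)).flatten ≤ (List.ofFn fun i => A (σ i)).flatten := by
  classical
  set W : Equiv.Perm (Fin n) → List (List α) := fun π => List.ofFn (fun i => A (π i)) with hW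
  have hperm : ∀ π σ : Equiv.Perm (Fin n), (W π).Perm (W σ) := by
    have base : ∀ π : Equiv.Perm (Fin n), (W π).Perm (List.ofFn A) := by
      intro π
      show (List.ofFn (fun i => A (π i))).Perm (List.ofFn A)
      rw [List.ofFn_eq_map, List.ofFn_eq_map (f := A)]
      have h : List.map (fun i => A (π i)) (List.finRange n)
          = List.map A (List.map π (List.finRange n)) := by
        rw [List.map_map]; rfl
      rw [h]
      apply List.Perm.map
      apply List.perm_of_nodup_nodup_toFinset_eq
      · exact (List.nodup_finRange n).map π.injective
      · exact List.nodup_finRange n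
      · ext x
        simp only [List.mem_toFinset, List.mem_map, List.mem_finRange, true_and, iff_true]
        exact ⟨π.symm x, π.apply_symm_apply x⟩
    intro π σ
    exact (base π).trans (base σ).symm
  have hWinj : Function.Injective W := by
    intro π σ h
    have h2 := List.ofFn_inj.1 h
    apply Equiv.ext; intro i
    exact hinj (congrFun h2 i)
  have hmem : ∀ {π : Equiv.Perm (Fin n)} {w : List α}, w ∈ W π → Primitive w := by
    intro π w hw
    simp only [hW, List.mem_ofFn, Set.mem_range] at hw
    obtain ⟨i, rfl⟩ := hw
    exact hprim _
  have hpos : ∀ {π : Equiv.Perm (Fin n)} {w : List α}, w ∈ W π → 0 < w.length :=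
    fun hw => List.length_pos_iff.2 (hmem hw).1
  have hchain : ∀ π : Equiv.Perm (Fin n),
      (∀ σ, (W π).flatten ≤ (W σ).flatten) →
      List.Chain' (fun u v : List α => u ++ v ≤ v ++ u) (W π) := by
    intro π hminπ
    show List.IsChain _ _
    rw [List.isChain_iff_getElem]
    intro i hi
    show (fun u v : List α => u ++ v ≤ v ++ u) ((W π).get ⟨i, by omega⟩) ((W π).get ⟨i+1, hi⟩)
    have hlen : (W π).length = n := by simp [hW]
    have hi' : i + 1 < n := by omega
    set a : Fin n := ⟨i, by omega⟩ with ha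
    set b : Fin n := ⟨i+1, hi'⟩ with hb
    have g1 : (W π).get ⟨i, by omega⟩ = A (π a) := by
      simp [hW, List.get_eq_getElem, List.getElem_ofFn, ha]
    have g2 : (W π).get ⟨i+1, by omega⟩ = A (π b) := by
      simp [hW, List.get_eq_getElem, List.getElem_ofFn, hb]
    rw [g1, g2]
    by_contra hcon
    have hlex : List.Lex (· < ·) (A (π b) ++ A (π a)) (A (π a) ++ A (π b)) := by
      rw [← lt_iff_lex]
      exact not_le.1 hcon
    obtain ⟨x, y, h1, h2⟩ := ofFn_swap_decomp (fun j => A (π j)) i hi'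
    have hWσ : W (π * Equiv.swap a b) = x ++ A (π b) :: A (π a) :: y := by
      rw [← h2]
      rfl
    have hWπ : W π = x ++ A (π a) :: A (π b) :: y := h1
    have himp := swap_improve hlex x y
    rw [← hWσ, ← hWπ] at himp
    exact absurd (hminπ (π * Equiv.swap a b)) (not_le.2 himp)
  have huniq : ∀ π σ : Equiv.Perm (Fin n),
      (∀ τ, (W π).flatten ≤ (W τ).flatten) → (∀ τ, (W σ).flatten ≤ (W τ).flatten) → π = σ := by
    intro π σ h1 h2
    apply hWinj
    have htrans : ∀ (τ : Equiv.Perm (Fin n)), ∀ u ∈ W τ, ∀ v ∈ W τ, ∀ w ∈ W τ,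
        u ++ v ≤ v ++ u → v ++ w ≤ w ++ v → u ++ w ≤ w ++ u := by
      intro τ u hu v hv w hw
      exact concat_le_trans (hpos hu) (hpos hv) (hpos hw)
    have hp1 := pairwise_of_chain' (W π) (htrans π) (hchain π h1)
    have hp2 := pairwise_of_chain' (W σ) (htrans σ) (hchain σ h2)
    exact eq_of_perm_of_pairwise (W π) (W σ)
      (fun u hu v hv hr1 hr2 => prim_eq_of_le_le (hmem hu) (hmem hv) hr1 hr2)
      (hperm π σ) hp1 hp2
  obtain ⟨π₀, -, hmin⟩ := Finset.exists_min_image Finset.univ (fun π => (W π).flatten)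
    ⟨1, Finset.mem_univ 1⟩
  exact ⟨π₀, fun σ => hmin σ (Finset.mem_univ σ),
    fun π hπ => huniq π π₀ hπ (fun τ => hmin τ (Finset.mem_univ τ))⟩
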